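/- arXiv:1302.4716 — 4 statements merged into one kernel-verified Lean document; each statement's English description precedes it below -/
import Mathlib

section
/- Let L be a negative definite lattice with basis E_1,...,E_s with nonnegative off-diagonal pairings, l' ∈ L⊗Q, and J* ⊆ {1,...,s}. If x_1 and x_2 both satisfy (x_n + l', E_j) ≤ 0 for all j ∈ J*, then the componentwise minimum x = min{x_1, x_2} also satisfies (x + l', E_j) ≤ 0 for all j ∈ J*. -/
open Classical

noncomputable section

def castQ {s : ℕ} (x : Fin s → ℤ) : Fin s → ℚ := fun i => (x i : ℚ)

def pairQ {s : ℕ} (B : Matrix (Fin s) (Fin s) ℤ) (x y : Fin s → ℚ) : ℚ :=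
  ∑ i, ∑ j, x i * (B i j : ℚ) * y j

def pairZ {s : ℕ} (B : Matrix (Fin s) (Fin s) ℤ) (x y : Fin s → ℤ) : ℤ :=
  ∑ i, ∑ j, x i * B i j * y j

def pq {s : ℕ} (B : Matrix (Fin s) (Fin s) ℤ) (v : Fin s → ℚ) (j : Fin s) : ℚ :=
  ∑ i, v i * (B i j : ℚ)

def chi {s : ℕ} (B : Matrix (Fin s) (Fin s) ℤ) (k : Fin s → ℚ) (l : Fin s → ℤ) : ℚ :=
  -(pairQ B (castQ l) (castQ l + k)) / 2

def NegDef {s : ℕ} (B : Matrix (Fin s) (Fin s) ℤ) : Prop :=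
  ∀ x : Fin s → ℚ, x ≠ 0 → pairQ B x x < 0

def plumbGraph {s : ℕ} (B : Matrix (Fin s) (Fin s) ℤ) : SimpleGraph (Fin s) :=
  SimpleGraph.fromRel (fun i j => 0 < B i j)

def Plumbing {s : ℕ} (B : Matrix (Fin s) (Fin s) ℤ) : Prop :=
  B.IsSymm ∧ NegDef B ∧ (∀ i j, i ≠ j → B i j = 0 ∨ B i j = 1) ∧
    (plumbGraph B).Connected ∧ (plumbGraph B).IsAcyclic

def IsCanonical {s : ℕ} (B : Matrix (Fin s) (Fin s) ℤ) (k : Fin s → ℚ) : Prop :=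
  ∀ j, pq B k j = -(B j j : ℚ) - 2

def RationalMat {s : ℕ} (B : Matrix (Fin s) (Fin s) ℤ) : Prop :=
  ∀ kc : Fin s → ℚ, IsCanonical B kc →
    ∀ l : Fin s → ℤ, (∀ t, 0 ≤ l t) → l ≠ 0 → 0 < chi B kc l

def HasBadSet {s : ℕ} (B : Matrix (Fin s) (Fin s) ℤ) (Jb : Finset (Fin s)) : Prop :=
  ∃ B' : Matrix (Fin s) (Fin s) ℤ, (∀ i j, i ≠ j → B' i j = B i j) ∧
    (∀ j, j ∉ Jb → B' j j = B j j) ∧ (∀ j ∈ Jb, B' j j ≤ B j j) ∧ RationalMat B'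

def MinClassRep {s : ℕ} (B : Matrix (Fin s) (Fin s) ℤ) (l' : Fin s → ℚ) : Prop :=
  (∀ i, 0 ≤ l' i) ∧ (∀ j, pq B l' j ≤ 0) ∧
    ∀ y : Fin s → ℤ, (∀ j, pq B (l' + castQ y) j ≤ 0) → ∀ i, 0 ≤ y i

def IsXcycle {s : ℕ} (B : Matrix (Fin s) (Fin s) ℤ) (l' : Fin s → ℚ) (Jb : Finset (Fin s))
    (i : Fin s → ℕ) (x : Fin s → ℤ) : Prop :=
  (∀ j ∈ Jb, x j = i j) ∧ (∀ j, j ∉ Jb → pq B (l' + castQ x) j ≤ 0) ∧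
    ∀ y : Fin s → ℤ, (∀ j ∈ Jb, y j = i j) → (∀ j, j ∉ Jb → pq B (l' + castQ y) j ≤ 0) →
      ∀ t, x t ≤ y t

def krep {s : ℕ} (kcan l' : Fin s → ℚ) : Fin s → ℚ := fun j => kcan j + 2 * l' j


lemma min_aux {s : ℕ} (B : Matrix (Fin s) (Fin s) ℤ)
    (hoff : ∀ i j : Fin s, i ≠ j → 0 ≤ B i j)
    (l' : Fin s → ℚ) (j : Fin s) (x1 x2 : Fin s → ℤ) (hx : x1 j ≤ x2 j)
    (h1 : pq B (l' + castQ x1) j ≤ 0) :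
    pq B (l' + castQ (fun i => min (x1 i) (x2 i))) j ≤ 0 := by
  unfold pq at *
  refine le_trans (Finset.sum_le_sum fun i _ => ?_) h1
  by_cases hij : i = j
  · subst hij
    simp [castQ, min_eq_left hx]
  · have hb : (0:ℚ) ≤ (B i j : ℚ) := by exact_mod_cast hoff i j hij
    apply mul_le_mul_of_nonneg_right _ hb
    simp only [Pi.add_apply, castQ]
    have : ((min (x1 i) (x2 i) : ℤ) : ℚ) ≤ ((x1 i : ℤ) : ℚ) := by
      exact_mod_cast min_le_left (x1 i) (x2 i)
    linarith

/-- the componentwise minimum of two cycles satisfying the anti-nef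
inequalities on `J*` again satisfies them. -/
theorem stmt2 (s : ℕ) (B : Matrix (Fin s) (Fin s) ℤ)
    (hsymm : B.IsSymm) (hneg : NegDef B)
    (hoff : ∀ i j : Fin s, i ≠ j → 0 ≤ B i j)
    (l' : Fin s → ℚ) (Jstar : Finset (Fin s))
    (x1 x2 : Fin s → ℤ)
    (h1 : ∀ j ∈ Jstar, pq B (l' + castQ x1) j ≤ 0)
    (h2 : ∀ j ∈ Jstar, pq B (l' + castQ x2) j ≤ 0) :
    ∀ j ∈ Jstar, pq B (l' + castQ (fun i => min (x1 i) (x2 i))) j ≤ 0 := by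
  intro j hj
  rcases le_total (x1 j) (x2 j) with h | h
  · exact min_aux B hoff l' j x1 x2 h (h1 j hj)
  · have := min_aux B hoff l' j x2 x1 h (h2 j hj)
    simpa [min_comm] using this
end
end

section
/- Fix a connected negative definite plumbing lattice L with basis {E_j}, a class representative l' ∈ L' with l' ≥ 0 and (l', E_j) ≤ 0 for all j (l' minimal in its class intersected with the anti-nef cone), a subset of distinguished vertices J̄ with complement J*, and i ∈ (Z≥0)^{J̄}. Then there exists a unique minimal cycle x(i) ∈ L such that: (a) the J̄-coefficients of x(i) equal i; (b) (x(i) + l', E_j) ≤ 0 for all j ∈ J*. Moreover x(0) = 0, x(i) ≥ 0, and x(i) + E_Ī ≤ x(i + 1_Ī) for every subset Ī ⊆ J̄, where E_Ī = Σ_{j∈Ī} E_j and 1_Ī is the corresponding 0-1 vector. -/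
open Classical

noncomputable section

section aux

variable {s : ℕ} {B : Matrix (Fin s) (Fin s) ℤ}

lemma offdiag_nonneg (hB : Plumbing B) {a b : Fin s} (h : a ≠ b) : (0:ℚ) ≤ (B a b : ℚ) := by
  rcases hB.2.2.1 a b h with h' | h' <;> simp [h']

lemma pq_add (u v : Fin s → ℚ) (j : Fin s) : pq B (u + v) j = pq B u j + pq B v j := by
  simp [pq, add_mul, Finset.sum_add_distrib]

/-- Key monotonicity: if `u ≤ v` pointwise and `u j = v j`, then `pq B u j ≤ pq B v j`. -/
lemma key_mono (hB : Plumbing B) {u v : Fin s → ℚ} {j : Fin s}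
    (h : ∀ t, u t ≤ v t) (hj : u j = v j) : pq B u j ≤ pq B v j := by
  apply Finset.sum_le_sum
  intro t _
  by_cases ht : t = j
  · subst ht; rw [hj]
  · exact mul_le_mul_of_nonneg_right (h t) (offdiag_nonneg hB ht)

/-- Feasible vectors. -/
def Feas (B : Matrix (Fin s) (Fin s) ℤ) (l' : Fin s → ℚ) (Jb : Finset (Fin s))
    (i : Fin s → ℕ) (y : Fin s → ℤ) : Prop :=
  (∀ j ∈ Jb, y j = i j) ∧ (∀ j, j ∉ Jb → pq B (l' + castQ y) j ≤ 0)

lemma feas_nonneg (hB : Plumbing B) {l' : Fin s → ℚ} (hl' : MinClassRep B l')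
    {Jb : Finset (Fin s)} {i : Fin s → ℕ} {y : Fin s → ℤ}
    (hy : Feas B l' Jb i y) : ∀ t, 0 ≤ y t := by
  set z : Fin s → ℤ := fun t => min (y t) 0 with hzdef
  have hzle : ∀ t, z t ≤ y t := fun t => min_le_left _ _
  have hzle0 : ∀ t, z t ≤ 0 := fun t => min_le_right _ _
  have hz : ∀ j, pq B (l' + castQ z) j ≤ 0 := by
    intro j
    by_cases h0 : y j < 0
    · have hjJ : j ∉ Jb := by
        intro hj
        have := hy.1 j hj
        omega
      refine le_trans (key_mono hB (fun t => ?_) ?_) (hy.2 j hjJ)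
      · exact add_le_add_right (Int.cast_le.mpr (hzle t) : castQ z t ≤ castQ y t) (l' t)
      · have hzj2 : z j = y j := min_eq_left (le_of_lt h0)
        simp only [Pi.add_apply, castQ, hzj2]
    · have hzj : z j = 0 := by simp [hzdef]; omega
      have h1 : pq B (l' + castQ z) j ≤ pq B (l' + castQ (0 : Fin s → ℤ)) j := by
        refine key_mono hB (fun t => ?_) ?_
        · exact add_le_add_right (Int.cast_le.mpr (hzle0 t) : castQ z t ≤ castQ 0 t) (l' t)
        · simp only [Pi.add_apply, castQ, hzj]; norm_num
      have h2 : pq B (l' + castQ (0 : Fin s → ℤ)) j = pq B l' j := by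
        congr 1
        funext t; simp [castQ]
      exact h1.trans (h2 ▸ hl'.2.1 j)
  have hnn := hl'.2.2 z hz
  intro t
  have := hnn t
  simp only [hzdef] at this
  omega

lemma feas_min (hB : Plumbing B) {l' : Fin s → ℚ} {Jb : Finset (Fin s)} {i : Fin s → ℕ}
    {y y' : Fin s → ℤ} (hy : Feas B l' Jb i y) (hy' : Feas B l' Jb i y') :
    Feas B l' Jb i (fun t => min (y t) (y' t)) := by
  constructor
  · intro j hj
    show min (y j) (y' j) = (i j : ℤ)
    rw [hy.1 j hj, hy'.1 j hj, min_self]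
  · intro j hj
    rcases min_cases (y j) (y' j) with ⟨he, _⟩ | ⟨he, _⟩
    · refine le_trans (key_mono hB (fun t => ?_) ?_) (hy.2 j hj)
      · exact add_le_add_right (Int.cast_le.mpr (min_le_left (y t) (y' t)) : castQ (fun t => min (y t) (y' t)) t ≤ castQ y t) (l' t)
      · have he' : min (y j) (y' j) = y j := he
        simp only [Pi.add_apply, castQ, he']
    · refine le_trans (key_mono hB (fun t => ?_) ?_) (hy'.2 j hj)
      · exact add_le_add_right (Int.cast_le.mpr (min_le_right (y t) (y' t)) : castQ (fun t => min (y t) (y' t)) t ≤ castQ y' t) (l' t)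
      · have he' : min (y j) (y' j) = y' j := he
        simp only [Pi.add_apply, castQ, he']

/-- existence of some feasible vector -/
lemma feas_exists (hB : Plumbing B) {l' : Fin s → ℚ} (hl' : MinClassRep B l')
    (Jb : Finset (Fin s)) (i : Fin s → ℕ) : ∃ y, Feas B l' Jb i y := by
  -- matrix M' : identity on Jb, B on complement
  set M : Matrix (Fin s) (Fin s) ℚ :=
    fun a b => if a ∈ Jb ∨ b ∈ Jb then (if a = b then 1 else 0) else (B a b : ℚ) with hM
  -- injectivity of mulVec
  have hinj : Function.Injective M.mulVecLin := by
    rw [← LinearMap.ker_eq_bot, LinearMap.ker_eq_bot']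
    intro x hx
    have hx' : M.mulVec x = 0 := hx
    have hxJ : ∀ a ∈ Jb, x a = 0 := by
      intro a ha
      have := congrFun hx' a
      rw [Matrix.mulVec, dotProduct] at this
      rw [show (0 : Fin s → ℚ) a = 0 from rfl] at this
      rw [Finset.sum_eq_single a] at this
      · simpa [hM, ha] using this
      · intro b _ hb
        simp [hM, ha, (Ne.symm hb : ¬ a = b)]
      · simp
    have hxB : ∀ a, a ∉ Jb → (∑ b, (B a b : ℚ) * x b) = 0 := by
      intro a ha
      have := congrFun hx' a
      rw [Matrix.mulVec, dotProduct] at this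
      rw [show (0 : Fin s → ℚ) a = 0 from rfl] at this
      rw [← this]
      apply Finset.sum_congr rfl
      intro b _
      by_cases hb : b ∈ Jb
      · simp [hM, hb, hxJ b hb]
      · simp [hM, ha, hb]
    by_contra hne
    have := hB.2.1 x hne
    have hzero : pairQ B x x = 0 := by
      rw [pairQ]
      apply Finset.sum_eq_zero
      intro a _
      by_cases ha : a ∈ Jb
      · apply Finset.sum_eq_zero; intro b _; simp [hxJ a ha]
      · have : ∑ b, x a * (B a b : ℚ) * x b = x a * ∑ b, (B a b : ℚ) * x b := by
          rw [Finset.mul_sum]; apply Finset.sum_congr rfl; intro b _; ring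
        rw [this, hxB a ha, mul_zero]
    rw [hzero] at this
    exact lt_irrefl _ this
  have hsurj : Function.Surjective M.mulVecLin :=
    LinearMap.injective_iff_surjective.mp hinj
  obtain ⟨w, hw⟩ := hsurj (fun a => if a ∈ Jb then 0 else -1)
  have hw' : M.mulVec w = fun a => if a ∈ Jb then 0 else -1 := hw
  have hwJ : ∀ a ∈ Jb, w a = 0 := by
    intro a ha
    have := congrFun hw' a
    rw [Matrix.mulVec, dotProduct, Finset.sum_eq_single a] at this
    · simpa [hM, ha] using this
    · intro b _ hb
      simp [hM, ha, (Ne.symm hb : ¬ a = b)]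
    · simp
  have hwB : ∀ a, a ∉ Jb → pq B w a = -1 := by
    intro a ha
    have := congrFun hw' a
    rw [Matrix.mulVec, dotProduct] at this
    simp only [ha, if_false] at this
    rw [pq, ← this]
    apply Finset.sum_congr rfl
    intro b _
    by_cases hb : b ∈ Jb
    · simp [hM, hb, hwJ b hb]
    · have hsym : B b a = B a b := congrFun (congrFun hB.1 a) b
      simp [hM, ha, hb]
      rw [hsym]; ring
  -- clear denominators
  set N : ℤ := ∏ t, ((w t).den : ℤ) with hN
  have hNpos : 0 < N := by
    apply Finset.prod_pos
    intro t _
    exact_mod_cast (w t).pos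
  set z : Fin s → ℤ := fun t => (w t).num * (∏ t' ∈ Finset.univ.erase t, ((w t').den : ℤ)) with hz
  have hzQ : ∀ t, (z t : ℚ) = (N : ℚ) * w t := by
    intro t
    have hnum : ((w t).num : ℚ) = w t * (w t).den := by
      have hd : ((w t).den : ℚ) ≠ 0 := Nat.cast_ne_zero.mpr (Rat.den_ne_zero _)
      exact (div_eq_iff hd).mp (Rat.num_div_den (w t))
    have hsplit : N = ((w t).den : ℤ) * ∏ t' ∈ Finset.univ.erase t, ((w t').den : ℤ) := by
      rw [hN, ← Finset.prod_erase_mul Finset.univ _ (Finset.mem_univ t)]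
      ring
    rw [hz]
    push_cast
    rw [hnum, hsplit]
    push_cast
    ring
  have hzJ : ∀ a ∈ Jb, z a = 0 := by
    intro a ha
    have : (z a : ℚ) = 0 := by rw [hzQ a, hwJ a ha, mul_zero]
    exact_mod_cast this
  have hzB : ∀ a, a ∉ Jb → pq B (castQ z) a = -N := by
    intro a ha
    have : pq B (castQ z) a = (N:ℚ) * pq B w a := by
      rw [pq, pq, Finset.mul_sum]
      apply Finset.sum_congr rfl
      intro b _
      rw [castQ, hzQ b]; ring
    rw [this, hwB a ha]; push_cast; ring
  -- base vector
  set y0 : Fin s → ℤ := fun t => if t ∈ Jb then (i t : ℤ) else 0 with hy0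
  set m : ℕ := Finset.univ.sup (fun j => ⌈pq B (l' + castQ y0) j⌉₊) with hm
  have hmle : ∀ j, pq B (l' + castQ y0) j ≤ (m : ℚ) := by
    intro j
    calc pq B (l' + castQ y0) j ≤ (⌈pq B (l' + castQ y0) j⌉₊ : ℚ) := Nat.le_ceil _
    _ ≤ (m : ℚ) := by
      have hle : ⌈pq B (l' + castQ y0) j⌉₊ ≤ m :=
        Finset.le_sup (f := fun j => ⌈pq B (l' + castQ y0) j⌉₊) (Finset.mem_univ j)
      exact_mod_cast hle
  refine ⟨fun t => y0 t + m * z t, ?_, ?_⟩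
  · intro j hj
    simp [hy0, hj, hzJ j hj]
  · intro j hj
    have hsplit : (l' + castQ (fun t => y0 t + m * z t)) =
        (l' + castQ y0) + (m : ℚ) • castQ z := by
      funext t
      simp [castQ]
      push_cast
      ring
    rw [hsplit, pq_add]
    have : pq B ((m:ℚ) • castQ z) j = (m:ℚ) * pq B (castQ z) j := by
      rw [pq, pq, Finset.mul_sum]
      apply Finset.sum_congr rfl
      intro b _
      simp; ring
    rw [this, hzB j hj]
    have h1 := hmle j
    have hN1 : (1:ℚ) ≤ (N:ℚ) := by exact_mod_cast hNpos
    nlinarith [Nat.cast_nonneg (α := ℚ) m]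

lemma exists_xcycle (hB : Plumbing B) {l' : Fin s → ℚ} (hl' : MinClassRep B l')
    (Jb : Finset (Fin s)) (i : Fin s → ℕ) : ∃ x, IsXcycle B l' Jb i x := by
  obtain ⟨y1, hy1⟩ := feas_exists hB hl' Jb i
  -- minimize total sum over feasible set
  obtain ⟨n0, ⟨x, hx, hxsum⟩, hleast⟩ :=
    Int.exists_least_of_bdd (P := fun n => ∃ y, Feas B l' Jb i y ∧ (∑ t, y t) = n)
      ⟨0, by
        rintro n ⟨y, hy, rfl⟩
        exact Finset.sum_nonneg fun t _ => feas_nonneg hB hl' hy t⟩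
      ⟨∑ t, y1 t, y1, hy1, rfl⟩
  refine ⟨x, hx.1, hx.2, ?_⟩
  intro y hya hyb t
  have hy : Feas B l' Jb i y := ⟨hya, hyb⟩
  have hmin := feas_min hB hx hy
  have h1 : n0 ≤ ∑ t, min (x t) (y t) := hleast _ ⟨_, hmin, rfl⟩
  have h2 : ∑ t, min (x t) (y t) ≤ ∑ t, x t :=
    Finset.sum_le_sum fun t _ => min_le_left _ _
  have heq : ∑ t, min (x t) (y t) = ∑ t, x t := le_antisymm h2 (hxsum ▸ h1)
  have := (Finset.sum_eq_sum_iff_of_le (fun t (_ : t ∈ Finset.univ) => min_le_left (x t) (y t))).mp heq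
  have := this t (Finset.mem_univ t)
  omega

end aux

/-- existence and uniqueness of the universal cycles `x(i)`. -/
theorem stmt3 (s : ℕ) (B : Matrix (Fin s) (Fin s) ℤ) (hB : Plumbing B)
    (l' : Fin s → ℚ) (hl' : MinClassRep B l')
    (Jb : Finset (Fin s)) :
    ∃ X : (Fin s → ℕ) → (Fin s → ℤ),
      (∀ i, IsXcycle B l' Jb i (X i)) ∧
      (∀ i x, IsXcycle B l' Jb i x → x = X i) ∧
      X 0 = 0 ∧
      (∀ i t, 0 ≤ X i t) ∧
      (∀ (i : Fin s → ℕ) (I : Finset (Fin s)), I ⊆ Jb → ∀ t,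
        X i t + (if t ∈ I then 1 else 0) ≤
          X (fun j => i j + (if j ∈ I then 1 else 0)) t) := by
  choose X hX using fun i => exists_xcycle hB hl' Jb i
  have huniq : ∀ i x, IsXcycle B l' Jb i x → x = X i := by
    intro i x hx
    funext t
    exact le_antisymm (hx.2.2 _ (hX i).1 (hX i).2.1 t) ((hX i).2.2 _ hx.1 hx.2.1 t)
  have hnn : ∀ i t, 0 ≤ X i t := fun i t =>
    feas_nonneg hB hl' ⟨(hX i).1, (hX i).2.1⟩ t
  refine ⟨X, hX, huniq, ?_, hnn, ?_⟩
  · funext t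
    have h0 : Feas B l' Jb 0 (0 : Fin s → ℤ) := by
      refine ⟨fun j _ => by simp, fun j _ => ?_⟩
      have : (l' + castQ (0 : Fin s → ℤ)) = l' := by funext r; simp [castQ]
      rw [this]; exact hl'.2.1 j
    have h1 : X 0 t ≤ (0 : Fin s → ℤ) t := (hX 0).2.2 0 h0.1 h0.2 t
    simp only [Pi.zero_apply] at h1
    have h2 := hnn 0 t
    show X 0 t = 0
    omega
  · intro i I hI t
    set i' : Fin s → ℕ := fun j => i j + (if j ∈ I then 1 else 0) with hi'
    set y : Fin s → ℤ := fun r => min (X i r) (X i' r - (if r ∈ I then 1 else 0)) with hy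
    have hfy : Feas B l' Jb i y := by
      constructor
      · intro j hj
        have h1 : X i j = (i j : ℤ) := (hX i).1 j hj
        have h2 : X i' j = (i' j : ℤ) := (hX i').1 j hj
        simp only [hy, h1, h2]
        simp only [hi']
        push_cast
        split <;> simp
      · intro j hj
        have hjI : j ∉ I := fun h => hj (hI h)
        rcases min_cases (X i j) (X i' j - (if j ∈ I then 1 else 0)) with ⟨he, _⟩ | ⟨he, _⟩
        · refine le_trans (key_mono hB (fun r => ?_) ?_) ((hX i).2.1 j hj)
          · have h2 : y r ≤ X i r := min_le_left _ _
            exact add_le_add_right (Int.cast_le.mpr h2 : castQ y r ≤ castQ (X i) r) (l' r)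
          · have he' : y j = X i j := he
            simp only [Pi.add_apply, castQ, he']
        · refine le_trans (key_mono hB (fun r => ?_) ?_) ((hX i').2.1 j hj)
          · have h1 : y r ≤ X i' r - (if r ∈ I then 1 else 0) := min_le_right _ _
            have h2 : y r ≤ X i' r := by split at h1 <;> omega
            exact add_le_add_right (Int.cast_le.mpr h2 : castQ y r ≤ castQ (X i') r) (l' r)
          · have he' : y j = X i' j := by
              show min _ _ = _
              rw [he]
              simp [hjI]
            simp only [Pi.add_apply, castQ, he']
    have := (hX i).2.2 y hfy.1 hfy.2 t
    have h2 : y t ≤ X i' t - (if t ∈ I then 1 else 0) := min_le_right _ _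
    omega

end
end

section
/- Laufer's rationality criterion: a connected negative definite plumbing graph G is rational (χ_can(l) > 0 for all effective nonzero l ∈ L) if and only if for one (equivalently any) computation sequence z_0 = E_j, z_{n+1} = z_n + E_{j(n)} with (z_n, E_{j(n)}) > 0 terminating at Artin's fundamental cycle z_min, one has (z_n, E_{j(n)}) = 1 at every step. -/
open Classical

noncomputable section

namespace Stmt7aux

variable {s : ℕ} (B : Matrix (Fin s) (Fin s) ℤ)

def pqZ (l : Fin s → ℤ) (j : Fin s) : ℤ := ∑ i, l i * B i j

lemma castQ_add (x y : Fin s → ℤ) : castQ (x + y) = castQ x + castQ y := by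
  funext i; simp [castQ]

lemma pairQ_add_left (x y z : Fin s → ℚ) :
    pairQ B (x + y) z = pairQ B x z + pairQ B y z := by
  simp [pairQ, add_mul, Finset.sum_add_distrib]

lemma pairQ_add_right (x y z : Fin s → ℚ) :
    pairQ B x (y + z) = pairQ B x y + pairQ B x z := by
  simp [pairQ, mul_add, Finset.sum_add_distrib]

lemma pairQ_symm (hsym : B.IsSymm) (x y : Fin s → ℚ) :
    pairQ B x y = pairQ B y x := by
  unfold pairQ
  rw [Finset.sum_comm]
  apply Finset.sum_congr rfl; intro j _
  apply Finset.sum_congr rfl; intro i _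
  rw [hsym.apply i j]; ring

lemma pairZ_cast (x y : Fin s → ℤ) :
    (pairZ B x y : ℚ) = pairQ B (castQ x) (castQ y) := by
  unfold pairZ pairQ castQ; push_cast; ring

lemma pq_cast (l : Fin s → ℤ) (j : Fin s) :
    pq B (castQ l) j = (pqZ B l j : ℚ) := by
  unfold pq pqZ castQ; push_cast; ring

lemma pairZ_single (l : Fin s → ℤ) (j : Fin s) :
    pairZ B l (Pi.single j 1) = pqZ B l j := by
  unfold pairZ pqZ
  apply Finset.sum_congr rfl; intro i _
  rw [Finset.sum_eq_single j]
  · simp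
  · intro b _ hb; simp [Pi.single_apply, hb]
  · simp

lemma pairZ_eq_sum_pq (a u : Fin s → ℤ) :
    pairZ B a u = ∑ j, pqZ B a j * u j := by
  unfold pairZ pqZ
  rw [Finset.sum_comm]
  simp [Finset.sum_mul]

lemma chi_zero (k : Fin s → ℚ) : chi B k 0 = 0 := by
  simp [chi, pairQ, castQ]

lemma chi_add (hsym : B.IsSymm) (k : Fin s → ℚ) (a b : Fin s → ℤ) :
    chi B k (a + b) = chi B k a + chi B k b - (pairZ B a b : ℚ) := by
  unfold chi
  rw [castQ_add, pairZ_cast]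
  simp only [pairQ_add_left, pairQ_add_right]
  rw [pairQ_symm B hsym (castQ b) (castQ a)]
  ring

lemma chi_single (hsym : B.IsSymm) (k : Fin s → ℚ) (hk : IsCanonical B k) (j : Fin s) :
    chi B k (Pi.single j 1) = 1 := by
  have h0 : chi B k ((0 : Fin s → ℤ) + Pi.single j 1)
      = chi B k 0 + chi B k (Pi.single j 1) - (pairZ B 0 (Pi.single j 1) : ℚ) :=
    chi_add B hsym k 0 (Pi.single j 1)
  -- compute chi of single directly instead
  unfold chi
  have hc : castQ (Pi.single j 1 : Fin s → ℤ) = Pi.single j (1:ℚ) := by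
    funext i; simp [castQ, Pi.single_apply]
  rw [hc, pairQ_add_right]
  have h1 : pairQ B (Pi.single j (1:ℚ)) (Pi.single j (1:ℚ)) = (B j j : ℚ) := by
    simp [pairQ, Pi.single_apply]
  have h2 : pairQ B (Pi.single j (1:ℚ)) k = -(B j j : ℚ) - 2 := by
    have : pairQ B (Pi.single j (1:ℚ)) k = ∑ j', k j' * (B j' j : ℚ) := by
      unfold pairQ
      rw [Finset.sum_eq_single j]
      · apply Finset.sum_congr rfl; intro i _
        rw [hsym.apply i j]; simp; ring
      · intro b _ hb
        simp [Pi.single_apply, hb]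
      · simp
    rw [this]
    exact hk j
  rw [h1, h2]; ring

lemma chi_add_single (hsym : B.IsSymm) (k : Fin s → ℚ) (hk : IsCanonical B k)
    (l : Fin s → ℤ) (j : Fin s) :
    chi B k (l + Pi.single j 1) = chi B k l + 1 - (pqZ B l j : ℚ) := by
  rw [chi_add B hsym k, chi_single B hsym k hk, pairZ_single]

end Stmt7aux

namespace Stmt7aux

variable {s : ℕ} (B : Matrix (Fin s) (Fin s) ℤ)

lemma pqZ_le (hoff : ∀ i j, i ≠ j → 0 ≤ B i j) (l c : Fin s → ℤ) (j : Fin s)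
    (hle : ∀ t, l t ≤ c t) (hj : l j = c j) : pqZ B l j ≤ pqZ B c j := by
  unfold pqZ
  apply Finset.sum_le_sum
  intro i _
  by_cases h : i = j
  · subst h; rw [hj]
  · exact mul_le_mul_of_nonneg_right (hle i) (hoff i j h)

lemma climb (hsym : B.IsSymm) (hoff : ∀ i j, i ≠ j → 0 ≤ B i j) (k : Fin s → ℚ)
    (hk : IsCanonical B k) :
    ∀ n : ℕ, ∀ l c : Fin s → ℤ, (∀ t, 0 ≤ l t) → (∀ t, l t ≤ c t) →
    (∀ j, pqZ B c j ≤ 0) → (∑ t, (c t - l t)) ≤ n →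
    ∃ x : Fin s → ℤ, (∀ t, l t ≤ x t) ∧ (∀ t, x t ≤ c t) ∧ (∀ j, pqZ B x j ≤ 0) ∧
      chi B k x ≤ chi B k l := by
  intro n
  induction n with
  | zero =>
    intro l c hl hlc hc hsum
    by_cases hln : ∀ j, pqZ B l j ≤ 0
    · exact ⟨l, fun t => le_refl _, hlc, hln, le_refl _⟩
    · exfalso
      push_neg at hln; obtain ⟨j, hj⟩ := hln
      have hjlt : l j < c j := by
        rcases lt_or_eq_of_le (hlc j) with h | h
        · exact h
        · exact absurd (le_trans (pqZ_le B hoff l c j hlc h) (hc j)) (not_le.mpr hj)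
      have hone : c j - l j ≤ ∑ t, (c t - l t) :=
        Finset.single_le_sum (f := fun t => c t - l t)
          (fun t _ => sub_nonneg.mpr (hlc t)) (Finset.mem_univ j)
      omega
  | succ n ih =>
    intro l c hl hlc hc hsum
    by_cases hln : ∀ j, pqZ B l j ≤ 0
    · exact ⟨l, fun t => le_refl _, hlc, hln, le_refl _⟩
    · push_neg at hln; obtain ⟨j, hj⟩ := hln
      have hjlt : l j < c j := by
        rcases lt_or_eq_of_le (hlc j) with h | h
        · exact h
        · exact absurd (le_trans (pqZ_le B hoff l c j hlc h) (hc j)) (not_le.mpr hj)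
      set l' := l + Pi.single j 1 with hl'
      have hl'app : ∀ t, l' t = l t + (if t = j then 1 else 0) := by
        intro t; simp [hl', Pi.single_apply]
      have hl'nonneg : ∀ t, 0 ≤ l' t := by
        intro t; rw [hl'app]; have := hl t; split <;> omega
      have hl'le : ∀ t, l' t ≤ c t := by
        intro t; rw [hl'app]
        by_cases h : t = j
        · subst h; simpa using hjlt
        · simp [h]; exact hlc t
      have hsum' : ∑ t, (c t - l' t) ≤ n := by
        have hsplit : ∑ t, (c t - l' t) = (∑ t, (c t - l t)) - 1 := by
          have he : ∀ t ∈ Finset.univ, c t - l' t = (c t - l t) - (if t = j then 1 else 0) :=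
            fun t _ => by rw [hl'app]; ring
          rw [Finset.sum_congr rfl he, Finset.sum_sub_distrib,
            Finset.sum_ite_eq' Finset.univ j (fun _ => (1:ℤ))]
          simp
        omega
      obtain ⟨x, h1, h2, h3, h4⟩ := ih l' c hl'nonneg hl'le hc hsum'
      refine ⟨x, fun t => le_trans (by rw [hl'app]; split <;> omega) (h1 t), h2, h3, ?_⟩
      have hchil' : chi B k l' = chi B k l + 1 - (pqZ B l j : ℚ) :=
        chi_add_single B hsym k hk l j
      have hpq1 : (1:ℚ) ≤ (pqZ B l j : ℚ) := by exact_mod_cast hj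
      rw [hchil'] at h4
      linarith

end Stmt7aux

namespace Stmt7aux

variable {s : ℕ} (B : Matrix (Fin s) (Fin s) ℤ)

def plumbGraph' (B : Matrix (Fin s) (Fin s) ℤ) : SimpleGraph (Fin s) :=
  SimpleGraph.fromRel (fun i j => 0 < B i j)

lemma walk_cross {P : Fin s → Prop} {a t : Fin s} (w : (plumbGraph' B).Walk a t)
    (ha : P a) (ht : ¬ P t) : ∃ u v, (plumbGraph' B).Adj u v ∧ P u ∧ ¬ P v := by
  induction w with
  | nil => exact absurd ha ht
  | cons h p ih =>
    rename_i u v w'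
    by_cases hb : P v
    · exact ih hb ht
    · exact ⟨_, _, h, ha, hb⟩

lemma zmin_pos (hsym : B.IsSymm) (hoff : ∀ i j, i ≠ j → 0 ≤ B i j)
    (hconn : (plumbGraph' B).Connected)
    (zmin : Fin s → ℤ) (hz0 : ∀ t, 0 ≤ zmin t) (hzne : zmin ≠ 0)
    (hzaf : ∀ j, pqZ B zmin j ≤ 0) : ∀ t, 1 ≤ zmin t := by
  intro t
  by_contra ht
  have hzt : zmin t = 0 := by have := hz0 t; omega
  obtain ⟨a, ha⟩ := Function.ne_iff.mp hzne
  have hapos : 0 < zmin a := lt_of_le_of_ne (hz0 a) (Ne.symm (by simpa using ha))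
  obtain ⟨w⟩ := hconn.preconnected a t
  obtain ⟨u, v, hadj, hu, hv⟩ := walk_cross B (P := fun i => 0 < zmin i) w hapos
    (by simp [hzt])
  push_neg at hv
  have hvz : zmin v = 0 := le_antisymm hv (hz0 v)
  simp only [plumbGraph', SimpleGraph.fromRel_adj] at hadj
  obtain ⟨hne, hor⟩ := hadj
  have hBuv : 0 < B u v := by
    rcases hor with h | h
    · exact h
    · rwa [← hsym.apply v u] at h
  have hpos : 0 < pqZ B zmin v := by
    unfold pqZ
    apply Finset.sum_pos' (fun i _ => ?_) ⟨u, Finset.mem_univ u, mul_pos hu hBuv⟩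
    by_cases h : i = v
    · subst h; rw [hvz]; simp
    · exact mul_nonneg (hz0 i) (hoff i v h)
  exact absurd (hzaf v) (not_le.mpr hpos)

lemma antinef_chi (hsym : B.IsSymm) (hoff : ∀ i j, i ≠ j → 0 ≤ B i j)
    (k : Fin s → ℚ) (hk : IsCanonical B k)
    (zmin : Fin s → ℤ) (hz0 : ∀ t, 0 ≤ zmin t)
    (hzaf : ∀ j, pqZ B zmin j ≤ 0)
    (hzle : ∀ z : Fin s → ℤ, (∀ t, 0 ≤ z t) → z ≠ 0 → (∀ j, pqZ B z j ≤ 0) →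
      ∀ t, zmin t ≤ z t)
    (hchi1 : chi B k zmin = 1) :
    ∀ n : ℕ, ∀ x : Fin s → ℤ, (∀ t, 0 ≤ x t) → x ≠ 0 → (∀ j, pqZ B x j ≤ 0) →
      (∑ t, x t) ≤ n → 1 ≤ chi B k x := by
  intro n
  induction n using Nat.strong_induction_on with
  | _ n ih =>
  intro x hx hxne hxaf hxsum
  have hxz : ∀ t, zmin t ≤ x t := hzle x hx hxne hxaf
  set u := x - zmin with hu'
  have huapp : ∀ t, u t = x t - zmin t := fun t => rfl
  have hxu : x = zmin + u := by funext t; rw [Pi.add_apply, huapp]; ring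
  have hu0 : ∀ t, 0 ≤ u t := fun t => by rw [huapp]; have := hxz t; omega
  have hpzu : pairZ B zmin u ≤ 0 := by
    rw [pairZ_eq_sum_pq]
    exact Finset.sum_nonpos fun j _ =>
      mul_nonpos_of_nonpos_of_nonneg (hzaf j) (hu0 j)
  have hchix : chi B k x = 1 + chi B k u - (pairZ B zmin u : ℚ) := by
    rw [hxu, chi_add B hsym, hchi1]
  by_cases hu : u = 0
  · rw [hu] at hchix
    have hz : pairZ B zmin (0 : Fin s → ℤ) = 0 := by simp [pairZ]
    rw [chi_zero, hz] at hchix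
    rw [hchix]; norm_num
  · have hux : ∀ t, u t ≤ x t := fun t => by rw [huapp]; have := hz0 t; omega
    obtain ⟨y, hy1, hy2, hy3, hy4⟩ :=
      climb B hsym hoff k hk (∑ t, (x t - u t)).toNat u x hu0 hux hxaf
        (Int.self_le_toNat _)
    have hyne : y ≠ 0 := by
      obtain ⟨t0, ht0⟩ := Function.ne_iff.mp hu
      have ht0' : 0 < u t0 := lt_of_le_of_ne (hu0 t0) (Ne.symm (by simpa using ht0))
      intro h0
      have := hy1 t0
      rw [h0] at this
      simp at this
      omega
    by_cases hyx : y = x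
    · exfalso
      rw [hyx] at hy4
      have hpzu' : (pairZ B zmin u : ℚ) ≤ 0 := by exact_mod_cast hpzu
      linarith
    · have hylt : ∑ t, y t < ∑ t, x t := by
        apply Finset.sum_lt_sum (fun t _ => hy2 t)
        obtain ⟨t0, ht0⟩ := Function.ne_iff.mp hyx
        exact ⟨t0, Finset.mem_univ t0, lt_of_le_of_ne (hy2 t0) ht0⟩
      have hy0 : ∀ t, 0 ≤ y t := fun t => le_trans (hu0 t) (hy1 t)
      have hsy : (0:ℤ) ≤ ∑ t, y t := Finset.sum_nonneg fun t _ => hy0 t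
      have hm : (∑ t, y t).toNat < n := by omega
      have h1 : 1 ≤ chi B k y :=
        ih _ hm y hy0 hyne hy3 (Int.self_le_toNat _)
      have hpzu' : (pairZ B zmin u : ℚ) ≤ 0 := by exact_mod_cast hpzu
      linarith

lemma chi_pos_of_chi1 (hsym : B.IsSymm) (hoff : ∀ i j, i ≠ j → 0 ≤ B i j)
    (hconn : (plumbGraph' B).Connected)
    (k : Fin s → ℚ) (hk : IsCanonical B k)
    (zmin : Fin s → ℤ) (hz0 : ∀ t, 0 ≤ zmin t) (hzne : zmin ≠ 0)
    (hzaf : ∀ j, pqZ B zmin j ≤ 0)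
    (hzle : ∀ z : Fin s → ℤ, (∀ t, 0 ≤ z t) → z ≠ 0 → (∀ j, pqZ B z j ≤ 0) →
      ∀ t, zmin t ≤ z t)
    (hchi1 : chi B k zmin = 1) :
    ∀ l : Fin s → ℤ, (∀ t, 0 ≤ l t) → l ≠ 0 → 0 < chi B k l := by
  intro l hl hlne
  have hz1 : ∀ t, 1 ≤ zmin t := zmin_pos B hsym hoff hconn zmin hz0 hzne hzaf
  set N := ∑ t, l t with hN
  have hNl : ∀ t, l t ≤ N :=
    fun t => Finset.single_le_sum (fun i _ => hl i) (Finset.mem_univ t)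
  have hN0 : 0 ≤ N := Finset.sum_nonneg fun t _ => hl t
  set c : Fin s → ℤ := fun t => N * zmin t with hc'
  have hcaf : ∀ j, pqZ B c j ≤ 0 := by
    intro j
    have : pqZ B c j = N * pqZ B zmin j := by
      unfold pqZ; rw [Finset.mul_sum]
      exact Finset.sum_congr rfl fun i _ => by rw [hc']; ring
    rw [this]
    exact mul_nonpos_of_nonneg_of_nonpos hN0 (hzaf j)
  have hlc : ∀ t, l t ≤ c t := by
    intro t
    calc l t ≤ N := hNl t
    _ = N * 1 := by ring
    _ ≤ N * zmin t := mul_le_mul_of_nonneg_left (hz1 t) hN0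
  obtain ⟨x, hx1, hx2, hx3, hx4⟩ :=
    climb B hsym hoff k hk (∑ t, (c t - l t)).toNat l c hl hlc hcaf
      (Int.self_le_toNat _)
  have hxne : x ≠ 0 := by
    obtain ⟨t0, ht0⟩ := Function.ne_iff.mp hlne
    have : 0 < l t0 := lt_of_le_of_ne (hl t0) (Ne.symm (by simpa using ht0))
    intro h0
    have h1 := hx1 t0
    rw [h0] at h1
    simp at h1
    omega
  have hx0 : ∀ t, 0 ≤ x t := fun t => le_trans (hl t) (hx1 t)
  have := antinef_chi B hsym hoff k hk zmin hz0 hzaf hzle hchi1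
    (∑ t, x t).toNat x hx0 hxne hx3 (Int.self_le_toNat _)
  linarith

end Stmt7aux


/-- Laufer's criterion of rationality. -/
theorem stmt7 (s : ℕ) (B : Matrix (Fin s) (Fin s) ℤ) (hB : Plumbing B)
    (kcan : Fin s → ℚ) (hk : IsCanonical B kcan)
    (zmin : Fin s → ℤ)
    (hzmin : (∀ t, 0 ≤ zmin t) ∧ zmin ≠ 0 ∧ (∀ j, pq B (castQ zmin) j ≤ 0) ∧
      ∀ z : Fin s → ℤ, (∀ t, 0 ≤ z t) → z ≠ 0 → (∀ j, pq B (castQ z) j ≤ 0) →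
        ∀ t, zmin t ≤ z t)
    (j0 : Fin s) (z : ℕ → Fin s → ℤ) (jseq : ℕ → Fin s) (T : ℕ)
    (hz0 : z 0 = Pi.single j0 1)
    (hstep : ∀ n < T, 0 < pairZ B (z n) (Pi.single (jseq n) 1) ∧
      z (n + 1) = z n + Pi.single (jseq n) 1)
    (hzT : z T = zmin) :
    (∀ l : Fin s → ℤ, (∀ t, 0 ≤ l t) → l ≠ 0 → 0 < chi B kcan l) ↔
      (∀ n < T, pairZ B (z n) (Pi.single (jseq n) 1) = 1) := by
  obtain ⟨hsym, hneg, hoffd, hconn, hacyc⟩ := hB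
  have hoff : ∀ i j, i ≠ j → 0 ≤ B i j := fun i j hij => by
    rcases hoffd i j hij with h | h <;> omega
  obtain ⟨hz0', hzne, hzaf, hzle⟩ := hzmin
  have hzafZ : ∀ j, Stmt7aux.pqZ B zmin j ≤ 0 := fun j => by
    have h := hzaf j; rw [Stmt7aux.pq_cast] at h; exact_mod_cast h
  have hzleZ : ∀ z : Fin s → ℤ, (∀ t, 0 ≤ z t) → z ≠ 0 →
      (∀ j, Stmt7aux.pqZ B z j ≤ 0) → ∀ t, zmin t ≤ z t := by
    intro w h1 h2 h3
    exact hzle w h1 h2 (fun j => by rw [Stmt7aux.pq_cast]; exact_mod_cast h3 j)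
  set p : ℕ → ℤ := fun m => pairZ B (z m) (Pi.single (jseq m) 1) with hp
  have hpq : ∀ n, p n = Stmt7aux.pqZ B (z n) (jseq n) := fun n =>
    Stmt7aux.pairZ_single B (z n) (jseq n)
  have hchain : ∀ n, n ≤ T →
      chi B kcan (z n) = 1 - ∑ m ∈ Finset.range n, ((p m : ℚ) - 1) := by
    intro n
    induction n with
    | zero =>
      intro _
      rw [hz0, Stmt7aux.chi_single B hsym kcan hk]
      simp
    | succ n ihn =>
      intro hn
      have hnT : n < T := hn
      obtain ⟨hpos, hrec⟩ := hstep n hnT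
      rw [hrec, Stmt7aux.chi_add_single B hsym kcan hk, ihn (le_of_lt hnT),
        Finset.sum_range_succ, hpq n]
      ring
  have hchiT : chi B kcan zmin = 1 - ∑ m ∈ Finset.range T, ((p m : ℚ) - 1) := by
    rw [← hzT]; exact hchain T (le_refl T)
  have hpge : ∀ m, m < T → 1 ≤ p m := fun m hm => (hstep m hm).1
  constructor
  · intro hrat n hn
    have h1 := hrat zmin hz0' hzne
    rw [hchiT] at h1
    have hsumcast : (∑ m ∈ Finset.range T, ((p m : ℚ) - 1))
        = ((∑ m ∈ Finset.range T, (p m - 1) : ℤ) : ℚ) := by push_cast; ring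
    rw [hsumcast] at h1
    have h2 : ((∑ m ∈ Finset.range T, (p m - 1) : ℤ) : ℚ) < 1 := by linarith
    have hS : (∑ m ∈ Finset.range T, (p m - 1) : ℤ) < 1 := by exact_mod_cast h2
    have hnn : ∀ m ∈ Finset.range T, 0 ≤ p m - 1 := fun m hm => by
      have := hpge m (Finset.mem_range.mp hm); omega
    have hS0 : (∑ m ∈ Finset.range T, (p m - 1) : ℤ) = 0 :=
      le_antisymm (by omega) (Finset.sum_nonneg hnn)
    have hz := (Finset.sum_eq_zero_iff_of_nonneg hnn).mp hS0 n (Finset.mem_range.mpr hn)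
    have : p n = 1 := by omega
    exact this
  · intro hone
    have hchi1 : chi B kcan zmin = 1 := by
      rw [hchiT]
      have hzero : ∀ m ∈ Finset.range T, ((p m : ℚ) - 1) = 0 := fun m hm => by
        have : p m = 1 := hone m (Finset.mem_range.mp hm)
        rw [this]; norm_num
      rw [Finset.sum_congr rfl hzero]
      simp
    exact Stmt7aux.chi_pos_of_chi1 B hsym hoff hconn kcan hk zmin hz0' hzne hzafZ
      hzleZ hchi1
end
end

section
/- Selection Procedure: Let G be a tree (no cycles) with vertex set J = J̄ ⊔ J*, adjacency pairing (E_i, E_j) ∈ {0,1} for i ≠ j, integer decorations σ_j, a subset Ĩ ⊆ J̄, supports S̃ ⊆ J* and disjoint families {G_α}_{α∈A} (connected components of S̃) and {C_β}_{β∈B} (connected components of some S \ S̃ ⊆ J*), satisfying σ_j(S̃) ≥ 0 for j ∈ J̃ and σ_j(S̃) ≤ 0 for j ∈ Ĩ \ J̃ (where σ_j(S) := σ_j - (E_j, E_S)). Then for any nonempty A' ⊆ A, B' ⊆ B with A' ∪ B' ≠ ∅, either there is α ∈ A' such that for every i ∈ G_α and every j ∈ J̃ adjacent to i, σ_j((S̃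 \ i) ∪ ∪_{β∈B'} C_β) > 0, or there is β ∈ B' such that for every i ∈ C_β and every j ∈ Ĩ \ J̃ adjacent to i, σ_j((S̃ ∪ i) \ ∪_{α∈A'} G_α) < 0. -/
open Classical

noncomputable section

lemma walk_in_finset {ι : Type} [Fintype ι] [DecidableEq ι] (G : SimpleGraph ι)
    (s : Finset ι) (hconn : (G.induce ((s : Set ι))).Connected)
    {u v : ι} (hu : u ∈ s) (hv : v ∈ s) :
    ∃ w : G.Walk u v, ∀ z ∈ w.support, z ∈ s := by
  obtain ⟨w⟩ := hconn.preconnected ⟨u, by simpa using hu⟩ ⟨v, by simpa using hv⟩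
  refine ⟨w.map (SimpleGraph.Embedding.induce _).toHom, ?_⟩
  intro z hz
  have hz : z ∈ (w.map (SimpleGraph.Embedding.induce (s : Set ι)).toHom).support := hz
  rw [SimpleGraph.Walk.support_map] at hz
  obtain ⟨⟨x, hx⟩, _, rfl⟩ := List.mem_map.mp hz
  simpa using hx

lemma core {ι : Type} [Fintype ι] [DecidableEq ι] (G : SimpleGraph ι) [DecidableRel G.Adj]
    (htree : G.IsAcyclic)
    (X : Type) [Finite X] [Nonempty X]
    (blob : X → Finset ι) (hbne : ∀ x, (blob x).Nonempty)
    (hbconn : ∀ x, (G.induce ((blob x : Set ι))).Connected)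
    (hbdisj : ∀ x y : X, x ≠ y → Disjoint (blob x) (blob y))
    (step : X → X) (jn ex en : X → ι) (lft : X → Bool)
    (hflip : ∀ x, lft (step x) = !lft x)
    (hexm : ∀ x, ex x ∈ blob x) (henm : ∀ x, en x ∈ blob (step x))
    (hje : ∀ x, G.Adj (jn x) (ex x)) (hjs : ∀ x, G.Adj (jn x) (en x))
    (hjnb : ∀ x y : X, jn x ∉ blob y)
    (hjne : ∀ x y : X, lft x ≠ lft y → jn x ≠ jn y)
    (hjadj : ∀ x y : X, ¬ G.Adj (jn x) (jn y)) : False := by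
  -- iterate `step` from an arbitrary point, find a minimal period
  obtain ⟨x₀⟩ := ‹Nonempty X›
  obtain ⟨m, n, hmn, he⟩ := Finite.exists_ne_map_eq_of_infinite (fun n => step^[n] x₀)
  have hEx : ∃ q, 0 < q ∧ ∃ z : X, step^[q] z = z := by
    rcases hmn.lt_or_gt with h | h
    · refine ⟨n - m, by omega, step^[m] x₀, ?_⟩
      rw [← Function.iterate_add_apply]
      have : n - m + m = n := by omega
      rw [this]; exact he.symm
    · refine ⟨m - n, by omega, step^[n] x₀, ?_⟩
      rw [← Function.iterate_add_apply]
      have : m - n + n = m := by omega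
      rw [this]; exact he
  classical
  set p := Nat.find hEx with hpdef
  obtain ⟨hppos, y, hpy⟩ := Nat.find_spec hEx
  set x : ℕ → X := fun i => step^[i] y with hxdef
  have hxsucc : ∀ i, x (i + 1) = step (x i) := fun i => Function.iterate_succ_apply' step i y
  have hx0 : x p = x 0 := hpy
  have hlft : ∀ i, lft (x (i + 1)) = !lft (x i) := fun i => by rw [hxsucc]; exact hflip _
  have hx01 : x 0 ≠ x 1 := by
    intro h
    have := hlft 0
    rw [← h] at this
    exact Bool.not_ne_self _ this.symm
  have hp2 : 2 ≤ p := by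
    rcases Nat.lt_or_ge p 2 with h | h
    · exfalso
      have hp1 : p = 1 := by omega
      apply hx01
      have : x 1 = x 0 := by rw [← hp1]; exact hx0
      exact this.symm
    · exact h
  -- distinctness of the cycle's points
  have hinj : ∀ i j : ℕ, i < j → j < p → x i ≠ x j := by
    intro i j hij hjp heq
    have h1 : step^[p - j] (x j) = y := by
      show step^[p - j] (step^[j] y) = y
      rw [← Function.iterate_add_apply]
      have : p - j + j = p := by omega
      rw [this]; exact hpy
    have h2 : step^[p - j + i] y = y := by
      rw [Function.iterate_add_apply]
      show step^[p-j] (x i) = y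
      rw [heq]; exact h1
    have := Nat.find_min hEx (m := p - j + i) (by omega)
    push_neg at this
    exact absurd h2 (by
      have := this (by omega) y
      exact this)
  have hne1 : ∀ m, m ≤ p → m ≠ 1 → x m ≠ x 1 := by
    intro m hm hm1
    rcases Nat.lt_or_ge m p with h | h
    · rcases Nat.lt_or_ge m 1 with h0 | h0
      · have : m = 0 := by omega
        rw [this]; exact hx01
      · exact fun he => hinj 1 m (by omega) h he.symm
    · have : m = p := by omega
      rw [this, hx0]; exact hx01
  -- walk pieces
  have piece : ∀ i, ∃ w : G.Walk (jn (x i)) (jn (x (i + 1))),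
      ∀ z ∈ w.support, z = jn (x i) ∨ z = jn (x (i + 1)) ∨ z ∈ blob (x (i + 1)) := by
    intro i
    have hen' : en (x i) ∈ blob (x (i + 1)) := by rw [hxsucc]; exact henm _
    obtain ⟨w1, hw1⟩ := walk_in_finset G (blob (x (i + 1))) (hbconn _) hen' (hexm (x (i + 1)))
    refine ⟨SimpleGraph.Walk.cons (hjs (x i)).symm.symm
      (SimpleGraph.Walk.concat w1 (hje (x (i + 1))).symm) |>.copy rfl rfl, ?_⟩
    intro z hz
    rw [SimpleGraph.Walk.support_copy, SimpleGraph.Walk.support_cons] at hz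
    rcases List.mem_cons.mp hz with h | h
    · exact Or.inl h
    · rw [SimpleGraph.Walk.support_concat] at h
      rw [List.mem_append] at h
      rcases h with h | h
      · exact Or.inr (Or.inr (hw1 z h))
      · exact Or.inr (Or.inl (List.mem_singleton.mp h))
  have hchain : ∀ m, 2 ≤ m → m ≤ p → ∃ w : G.Walk (jn (x 1)) (jn (x m)),
      ∀ z ∈ w.support, z ∉ blob (x 1) := by
    intro m hm2
    induction m, hm2 using Nat.le_induction with
    | base =>
      intro hp
      obtain ⟨w, hw⟩ := piece 1
      refine ⟨w, fun z hz hzb => ?_⟩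
      rcases hw z hz with h | h | h
      · exact hjnb (x 1) (x 1) (h ▸ hzb)
      · exact hjnb (x 2) (x 1) (h ▸ hzb)
      · exact (Finset.disjoint_left.mp (hbdisj _ _ (hne1 2 hp (by omega))) h) hzb
    | succ m hm ih =>
      intro hp
      obtain ⟨w, hw⟩ := ih (by omega)
      obtain ⟨w2, hw2⟩ := piece m
      refine ⟨w.append w2, fun z hz hzb => ?_⟩
      rcases (SimpleGraph.Walk.mem_support_append_iff _ _).mp hz with h | h
      · exact hw z h hzb
      · rcases hw2 z h with h | h | h
        · exact hjnb (x m) (x 1) (h ▸ hzb)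
        · exact hjnb (x (m + 1)) (x 1) (h ▸ hzb)
        · exact (Finset.disjoint_left.mp (hbdisj _ _ (hne1 (m + 1) hp (by omega))) h) hzb
  obtain ⟨w1, hw1⟩ := piece 0
  obtain ⟨w2, hw2⟩ := hchain p hp2 le_rfl
  set w2' : G.Walk (jn (x 1)) (jn (x 0)) := w2.copy rfl (congrArg jn hx0) with hw2'def
  have hw2' : ∀ z ∈ w2'.support, z ∉ blob (x 1) := by
    intro z hz
    rw [hw2'def, SimpleGraph.Walk.support_copy] at hz
    exact hw2 z hz
  have hj01 : jn (x 0) ≠ jn (x 1) := by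
    refine hjne _ _ ?_
    rw [hlft 0]
    exact (Bool.not_ne_self _).symm
  let p1 : G.Path (jn (x 0)) (jn (x 1)) := ⟨w1.bypass, SimpleGraph.Walk.bypass_isPath w1⟩
  let p2 : G.Path (jn (x 0)) (jn (x 1)) :=
    ⟨w2'.reverse.bypass, SimpleGraph.Walk.bypass_isPath _⟩
  have heqp : p1 = p2 := SimpleGraph.isAcyclic_iff_path_unique.mp htree p1 p2
  have heqw : w1.bypass = w2'.reverse.bypass := congrArg Subtype.val heqp
  have hlen : 0 < w1.bypass.length := by
    rcases Nat.eq_zero_or_pos w1.bypass.length with h | h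
    · exact absurd (SimpleGraph.Walk.eq_of_length_eq_zero h) hj01
    · exact h
  set v := w1.bypass.getVert 1 with hvdef
  have hadj : G.Adj (jn (x 0)) v := by
    have := SimpleGraph.Walk.adj_getVert_succ w1.bypass (i := 0) hlen
    simpa using this
  have hvsup : v ∈ w1.bypass.support :=
    SimpleGraph.Walk.mem_support_iff_exists_getVert.mpr ⟨1, rfl, by omega⟩
  have hvblob : v ∈ blob (x 1) := by
    rcases hw1 v (SimpleGraph.Walk.support_bypass_subset _ hvsup) with h | h | h
    · exact absurd h hadj.ne'
    · exact absurd (h ▸ hadj) (hjadj (x 0) (x 1))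
    · exact h
  apply hw2' v ?_ hvblob
  have hv2 : v ∈ w2'.reverse.bypass.support := heqw ▸ hvsup
  have hv3 := SimpleGraph.Walk.support_bypass_subset _ hv2
  rwa [SimpleGraph.Walk.support_reverse, List.mem_reverse] at hv3

/-- `σ_j(S) = σ_j - (E_j, E_S)` : the decoration minus the number of neighbours in `S`. -/
def sig {ι : Type} [Fintype ι] [DecidableEq ι] (G : SimpleGraph ι) [DecidableRel G.Adj]
    (σ : ι → ℤ) (j : ι) (S : Finset ι) : ℤ :=
  σ j - ((S.filter (fun i => G.Adj j i)).card : ℤ)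

/-- the Selection Procedure (Proposition 4.9). -/
theorem stmt14 (ι : Type) [Fintype ι] [DecidableEq ι]
    (G : SimpleGraph ι) [DecidableRel G.Adj] (htree : G.IsAcyclic)
    (Jb Jstar : Finset ι) (hpart : ∀ v, v ∈ Jb ↔ v ∉ Jstar)
    (hnoadj : ∀ i ∈ Jb, ∀ j ∈ Jb, ¬ G.Adj i j)
    (σ : ι → ℤ)
    (Itil Jtil : Finset ι) (hJI : Jtil ⊆ Itil) (hIJb : Itil ⊆ Jb)
    (Stil Sc : Finset ι) (hStil : Stil ⊆ Jstar) (hSc : Sc ⊆ Jstar)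
    (hdisj : Disjoint Stil Sc)
    (A B : Type) [Fintype A] [DecidableEq A] [Fintype B] [DecidableEq B]
    (Gc : A → Finset ι) (Cc : B → Finset ι)
    -- `Gc` are the connected components of `S̃`:
    (hGu : Finset.univ.biUnion Gc = Stil)
    (hGne : ∀ a, (Gc a).Nonempty)
    (hGconn : ∀ a, (G.induce ((Gc a : Set ι))).Connected)
    (hGdisj : ∀ a a', a ≠ a' → Disjoint (Gc a) (Gc a'))
    (hGsep : ∀ a a', a ≠ a' → ∀ i ∈ Gc a, ∀ i' ∈ Gc a', ¬ G.Adj i i')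
    -- `Cc` are the connected components of `S \ S̃`:
    (hCu : Finset.univ.biUnion Cc = Sc)
    (hCne : ∀ b, (Cc b).Nonempty)
    (hCconn : ∀ b, (G.induce ((Cc b : Set ι))).Connected)
    (hCdisj : ∀ b b', b ≠ b' → Disjoint (Cc b) (Cc b'))
    (hCsep : ∀ b b', b ≠ b' → ∀ i ∈ Cc b, ∀ i' ∈ Cc b', ¬ G.Adj i i')
    -- hypotheses on the σ-values (Lemma 4.8(c)):
    (hsig1 : ∀ j ∈ Jtil, 0 ≤ sig G σ j Stil)
    (hsig2 : ∀ j ∈ Itil \ Jtil, sig G σ j Stil ≤ 0)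
    (A' : Finset A) (B' : Finset B) (hne : A'.Nonempty ∨ B'.Nonempty) :
    (∃ a ∈ A', ∀ i ∈ Gc a, ∀ j ∈ Jtil, G.Adj j i →
        0 < sig G σ j ((Stil.erase i) ∪ B'.biUnion Cc)) ∨
    (∃ b ∈ B', ∀ i ∈ Cc b, ∀ j ∈ Itil \ Jtil, G.Adj j i →
        sig G σ j ((insert i Stil) \ A'.biUnion Gc) < 0) := by
  by_contra hcon
  push_neg at hcon
  obtain ⟨hA, hB⟩ := hcon
  have hGsub : ∀ a, Gc a ⊆ Stil := fun a => by
    rw [← hGu]; exact Finset.subset_biUnion_of_mem Gc (Finset.mem_univ a)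
  have hCsub : ∀ b, Cc b ⊆ Sc := fun b => by
    rw [← hCu]; exact Finset.subset_biUnion_of_mem Cc (Finset.mem_univ b)
  -- Step existence for `A'`-components
  have stepA : ∀ a ∈ A', ∃ (j e : ι), j ∈ Jtil ∧ e ∈ Gc a ∧ G.Adj j e ∧
      ∃ b ∈ B', ∃ s ∈ Cc b, G.Adj j s := by
    intro a ha
    obtain ⟨i, hi, j, hj, hji, hs⟩ := hA a ha
    refine ⟨j, i, hj, hi, hji, ?_⟩
    by_contra hno
    push_neg at hno
    have hU : ∀ u ∈ B'.biUnion Cc, ¬ G.Adj j u := by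
      intro u hu
      obtain ⟨b, hb, hub⟩ := Finset.mem_biUnion.mp hu
      exact hno b hb u hub
    have hUe : (B'.biUnion Cc).filter (fun x => G.Adj j x) = ∅ :=
      Finset.filter_eq_empty_iff.mpr hU
    have hifil : i ∈ Stil.filter (fun x => G.Adj j x) :=
      Finset.mem_filter.mpr ⟨hGsub a hi, hji⟩
    have hcard : 1 ≤ (Stil.filter (fun x => G.Adj j x)).card :=
      Finset.card_pos.mpr ⟨i, hifil⟩
    have key : sig G σ j ((Stil.erase i) ∪ B'.biUnion Cc) = sig G σ j Stil + 1 := by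
      unfold sig
      rw [Finset.filter_union, hUe, Finset.union_empty, Finset.filter_erase,
          Finset.card_erase_of_mem hifil, Nat.cast_sub hcard]
      push_cast
      ring
    have := hsig1 j hj
    linarith [key ▸ hs]
  -- Step existence for `B'`-components
  have stepB : ∀ b ∈ B', ∃ (j e : ι), j ∈ Itil \ Jtil ∧ e ∈ Cc b ∧ G.Adj j e ∧
      ∃ a ∈ A', ∃ s ∈ Gc a, G.Adj j s := by
    intro b hb
    obtain ⟨i, hi, j, hj, hji, hs⟩ := hB b hb
    refine ⟨j, i, hj, hi, hji, ?_⟩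
    by_contra hno
    push_neg at hno
    have hV : ∀ u ∈ A'.biUnion Gc, ¬ G.Adj j u := by
      intro u hu
      obtain ⟨a, ha, hua⟩ := Finset.mem_biUnion.mp hu
      exact hno a ha u hua
    have hiS : i ∉ Stil := Finset.disjoint_right.mp hdisj (hCsub b hi)
    have hiV : i ∉ A'.biUnion Gc := by
      intro h
      obtain ⟨a, _, h⟩ := Finset.mem_biUnion.mp h
      exact hiS (hGsub a h)
    have hfe : (Stil \ A'.biUnion Gc).filter (fun x => G.Adj j x) =
        Stil.filter (fun x => G.Adj j x) := by
      apply Finset.Subset.antisymm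
      · exact Finset.filter_subset_filter _ Finset.sdiff_subset
      · intro z hz
        rw [Finset.mem_filter] at hz
        exact Finset.mem_filter.mpr
          ⟨Finset.mem_sdiff.mpr ⟨hz.1, fun hzV => hV z hzV hz.2⟩, hz.2⟩
    have hifil : i ∉ Stil.filter (fun x => G.Adj j x) :=
      fun h => hiS (Finset.mem_filter.mp h).1
    have key : sig G σ j ((insert i Stil) \ A'.biUnion Gc) = sig G σ j Stil - 1 := by
      unfold sig
      rw [Finset.insert_sdiff_of_notMem _ hiV, Finset.filter_insert, if_pos hji,
          Finset.card_insert_of_notMem (fun h => hifil (hfe ▸ h)), hfe]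
      push_cast
      ring
    have := hsig2 j hj
    linarith [key ▸ hs]
  -- Set up the abstract alternating-step structure and apply `core`
  let X := {x : A ⊕ B // Sum.elim (fun a => a ∈ A') (fun b => b ∈ B') x}
  have hXne : Nonempty X := by
    rcases hne with ⟨a, ha⟩ | ⟨b, hb⟩
    · exact ⟨⟨Sum.inl a, ha⟩⟩
    · exact ⟨⟨Sum.inr b, hb⟩⟩
  let blob : X → Finset ι := fun x => Sum.elim Gc Cc x.1
  let lft : X → Bool := fun x => x.1.isLeft
  have hstep : ∀ x : X, ∃ (y : X) (j e s : ι), lft y = !lft x ∧ j ∈ Itil ∧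
      (j ∈ Jtil ↔ lft x = true) ∧ e ∈ blob x ∧ s ∈ blob y ∧ G.Adj j e ∧ G.Adj j s := by
    rintro ⟨x, hx⟩
    cases x with
    | inl a =>
      obtain ⟨j, e, hj, he, hje, b, hb, s, hs, hjs⟩ := stepA a hx
      exact ⟨⟨Sum.inr b, hb⟩, j, e, s, rfl, hJI hj, by simp [lft, hj], he, hs, hje, hjs⟩
    | inr b =>
      obtain ⟨j, e, hj, he, hje, a, ha, s, hs, hjs⟩ := stepB b hx
      exact ⟨⟨Sum.inl a, ha⟩, j, e, s, rfl, (Finset.mem_sdiff.mp hj).1,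
        by simp [lft, (Finset.mem_sdiff.mp hj).2], he, hs, hje, hjs⟩
  choose stp jn ex en hflip hjI' hjJ hexm henm hje' hjs' using hstep
  have hblobJ : ∀ x : X, blob x ⊆ Jstar := by
    rintro ⟨x, hx⟩
    cases x with
    | inl a => exact (hGsub a).trans hStil
    | inr b => exact (hCsub b).trans hSc
  have hbne : ∀ x : X, (blob x).Nonempty := by
    rintro ⟨x, hx⟩
    cases x with
    | inl a => exact hGne a
    | inr b => exact hCne b
  have hbconn : ∀ x : X, (G.induce ((blob x : Set ι))).Connected := by
    rintro ⟨x, hx⟩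
    cases x with
    | inl a => exact hGconn a
    | inr b => exact hCconn b
  have hbdisj : ∀ x y : X, x ≠ y → Disjoint (blob x) (blob y) := by
    rintro ⟨x, hx⟩ ⟨y, hy⟩ hxy
    cases x with
    | inl a =>
      cases y with
      | inl a' => exact hGdisj a a' (fun h => hxy (by subst h; exact Subtype.ext rfl))
      | inr b => exact hdisj.mono (hGsub a) (hCsub b)
    | inr b =>
      cases y with
      | inl a => exact (hdisj.mono (hGsub a) (hCsub b)).symm
      | inr b' => exact hCdisj b b' (fun h => hxy (by subst h; exact Subtype.ext rfl))
  have hjnb : ∀ x y : X, jn x ∉ blob y :=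
    fun x y h => (hpart (jn x)).mp (hIJb (hjI' x)) (hblobJ y h)
  have hjne : ∀ x y : X, lft x ≠ lft y → jn x ≠ jn y := by
    intro x y hl he
    have h1 := hjJ x
    have h2 := hjJ y
    rw [he] at h1
    rw [h1] at h2
    exact hl (by cases hx : lft x <;> cases hy : lft y <;> simp_all)
  have hjadj : ∀ x y : X, ¬ G.Adj (jn x) (jn y) :=
    fun x y => hnoadj _ (hIJb (hjI' x)) _ (hIJb (hjI' y))
  exact core G htree X blob hbne hbconn hbdisj stp jn ex en lft hflip hexm henm
    hje' hjs' hjnb hjne hjadj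
end
end
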